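/- There is a closed λ-term succ_λ of Λ_det and a constant c such that for every value k and every natural number n, succ_λ k ⟨n̂⟩ →det^m k ⟨succ(n̂)⟩ where m ≤ c·(log₂(n+1)+1), i.e. the successor of a binary counter is computed in O(log n) →det-steps. -/
import Mathlib


namespace LogTM

/-- Untyped λ-terms with de Bruijn indices. -/
inductive Lam : Type
  | var : ℕ → Lam
  | lam : Lam → Lam
  | app : Lam → Lam → Lam

namespace Lam

/-- Values: variables and abstractions. -/
def IsValue : Lam → Prop
  | var _ => True
  | lam _ => True
  | app _ _ => False

/-- Terms of the deterministic λ-calculus `Λ_det`: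
    the argument of every application is a value. -/
def InDet : Lam → Prop
  | var _ => True
  | lam t => InDet t
  | app t u => InDet t ∧ InDet u ∧ IsValue u

/-- Shift the free variables `≥ d` by one. -/
def lift : ℕ → Lam → Lam
  | d, var n => if n < d then var n else var (n + 1)
  | d, lam t => lam (lift (d + 1) t)
  | d, app t u => app (lift d t) (lift d u)

/-- Capture-avoiding substitution `t[k := u]`. -/
def subst : Lam → ℕ → Lam → Lam
  | var n, k, u => if n < k then var n else if n = k then u else var (n - 1)
  | lam t, k, u => lam (subst t (k + 1) (lift 0 u))
  | app t s, k, u => app (subst t k u) (subst s k u)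

/-- Weak evaluation `→det` of the deterministic λ-calculus: β at the root,
    closed under evaluation contexts `E ::= ⟨·⟩ | E v`. -/
inductive Step : Lam → Lam → Prop
  | beta {t v : Lam} : IsValue v → Step (app (lam t) v) (subst t 0 v)
  | appL {t t' v : Lam} : IsValue v → Step t t' → Step (app t v) (app t' v)

/-- `n`-fold iteration of `→det`. -/
inductive StepN : ℕ → Lam → Lam → Prop
  | refl (t : Lam) : StepN 0 t t
  | head {n : ℕ} {t u r : Lam} : Step t u → StepN n u r → StepN (n + 1) t r

/-- All free variables are `< d`. -/
def ClosedUnder : ℕ → Lam → Prop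
  | d, var n => n < d
  | d, lam t => ClosedUnder (d + 1) t
  | d, app t u => ClosedUnder d t ∧ ClosedUnder d u

/-- Closed terms. -/
def Closed (t : Lam) : Prop := ClosedUnder 0 t

end Lam

/-- `n` nested abstractions. -/
def iterLam : ℕ → Lam → Lam
  | 0, t => t
  | n + 1, t => .lam (iterLam n t)

/-- Left-nested applications. -/
def mkApps : Lam → List Lam → Lam
  | t, [] => t
  | t, u :: us => mkApps (.app t u) us

/-- Scott encoding of the character `a` of a `k`-letter (ordered) alphabet:
    `⟨a_i⟩ = λx_1…λx_k.x_i`. -/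
def encChar (k : ℕ) (a : Fin k) : Lam := iterLam k (.var (k - 1 - (a : ℕ)))

/-- Scott encoding of strings over a `k`-letter (ordered) alphabet:
    `⟨ε⟩ = λx_1…λx_k.λx_ε.x_ε` and `⟨a_i·r⟩ = λx_1…λx_k.λx_ε.x_i ⟨r⟩`. -/
def encStr (k : ℕ) : List (Fin k) → Lam
  | [] => iterLam (k + 1) (.var 0)
  | a :: r => iterLam (k + 1) (.app (.var (k - (a : ℕ))) (encStr k r))

/-- Scott encoding of binary strings (alphabet `{0,1}`, `false = 0 < 1 = true`). -/
def encBits : List Bool → Lam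
  | [] => .lam (.lam (.lam (.var 0)))
  | false :: s => .lam (.lam (.lam (.app (.var 2) (encBits s))))
  | true :: s => .lam (.lam (.lam (.app (.var 1) (encBits s))))

/-- Successor on reversed binary strings. -/
def rsucc : List Bool → List Bool
  | [] => [true]
  | false :: s => true :: s
  | true :: s => false :: rsucc s

/-- Predecessor on (nonempty) reversed binary strings. -/
def rpred : List Bool → List Bool
  | [] => []
  | false :: s => true :: rpred s
  | [true] => []
  | true :: b :: s => false :: b :: s

/-- Lookup of the `(n+1)`-th character of a string using a reversed-binary counter. -/
def rlookup {α : Type*} : List Bool → List α → Option α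
  | _, [] => none
  | [], c :: _ => some c
  | b :: nb, _ :: s => rlookup (rpred (b :: nb)) s

/-- Input alphabet `B_I = {0, 1, L, R}`. -/
inductive BI : Type
  | b0 | b1 | bL | bR

/-- Work alphabet `B_W = {0, 1, □}`. -/
inductive BW : Type
  | w0 | w1 | wB

/-- Input head moves `{-1, +1, 0}`. -/
inductive IDir : Type
  | minus | plus | zero

/-- Work head moves `{←, →, ↓}`. -/
inductive WDir : Type
  | left | right | stay

/-- A deterministic binary Turing machine with input: states `Fin Q`, initial state
    `qin`, final states `qT` and `qF`, and a partial transition function `δ` that is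
    undefined on the final states. -/
structure TM where
  Q : ℕ
  qin : Fin Q
  qT : Fin Q
  qF : Fin Q
  δ : BI → BW → Fin Q → Option (IDir × BW × WDir × Fin Q)
  δ_final : ∀ b a s, (s = qT ∨ s = qF) → δ b a s = none

/-- A configuration `(i, n | w_l, a, w_r | s)`: read-only input `i`, input-head
    position `n`, work tape `w_l, a, w_r` (head on `a`), current state `s`. -/
structure Config (M : TM) where
  input : List BI
  pos : ℕ
  left : List BW
  head : BW
  right : List BW
  state : Fin M.Q

/-- Final configurations: the state is `qT` or `qF`. -/
def Config.Final {M : TM} (C : Config M) : Prop := C.state = M.qT ∨ C.state = M.qF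

/-- One machine transition, as a partial function (the relation `C →M D` is
    `M.step C = some D`). -/
def TM.step (M : TM) (C : Config M) : Option (Config M) :=
  match C.input[C.pos]? with
  | none => none
  | some b =>
    match M.δ b C.head C.state with
    | none => none
    | some (d, a', mv, s') =>
      let pos' : ℕ :=
        match d with
        | .minus => C.pos - 1
        | .plus => C.pos + 1
        | .zero => C.pos
      let w : List BW × BW × List BW :=
        match mv with
        | .stay => (C.left, a', C.right)
        | .left =>
          match C.left.getLast? with
          | none => ([], BW.wB, a' :: C.right)
          | some a'' => (C.left.dropLast, a'', a' :: C.right)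
        | .right =>
          match C.right with
          | [] => (C.left ++ [a'], BW.wB, [])
          | a'' :: r => (C.left ++ [a'], a'', r)
      some ⟨C.input, pos', w.1, w.2.1, w.2.2, s'⟩

/-- `n` machine transitions. -/
def TM.multiStep (M : TM) : ℕ → Config M → Option (Config M)
  | 0, C => some C
  | n + 1, C => (M.step C).bind (M.multiStep n)

/-- The fixed ordering `0 < 1 < L < R` of `B_I`. -/
def BI.toFin : BI → Fin 4
  | b0 => 0
  | b1 => 1
  | bL => 2
  | bR => 3

/-- The fixed ordering `0 < 1 < □` of `B_W`. -/
def BW.toFin : BW → Fin 3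
  | w0 => 0
  | w1 => 1
  | wB => 2

/-- Encoding of configurations:
    `⟨C⟩ = λx.(x ⟨i⟩ ⟨n̂⟩ ⟨w_l^R⟩ ⟨a⟩ ⟨w_r⟩ ⟨s⟩)`. -/
def encConfig {M : TM} (C : Config M) : Lam :=
  .lam (mkApps (.var 0)
    [encStr 4 (C.input.map BI.toFin),
     encBits (Nat.bits C.pos),
     encStr 3 (C.left.reverse.map BW.toFin),
     encChar 3 C.head.toFin,
     encStr 3 (C.right.map BW.toFin),
     encChar M.Q C.state])

/-- A bit as an input character. -/
def bitToBI (b : Bool) : BI := if b then .b1 else .b0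

/-- The initial configuration on binary input `i`: input tape `L·i·R`,
    input head at position `0`, empty work tape, initial state. -/
def initConfig (M : TM) (i : List Bool) : Config M :=
  ⟨BI.bL :: (i.map bitToBI) ++ [BI.bR], 0, [], BW.wB, [], M.qin⟩

/-- Scott-encoded booleans: `⟨true⟩ = λx.λy.x`, `⟨false⟩ = λx.λy.y`. -/
def encBool : Bool → Lam
  | true => .lam (.lam (.var 1))
  | false => .lam (.lam (.var 0))


/-- AUX: handler for the `0·s` case: `λr λf λk. k ⟨1·r⟩`. -/
def HA : Lam :=
  .lam (.lam (.lam (.app (.var 0) (.lam (.lam (.lam (.app (.var 1) (.var 5))))))))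

/-- AUX: handler for the `1·s` case: `λr λf λk. f f r (λr'. k ⟨0·r'⟩)`. -/
def HB : Lam :=
  .lam (.lam (.lam (.app (.app (.app (.var 1) (.var 1)) (.var 2))
    (.lam (.app (.var 1) (.lam (.lam (.lam (.app (.var 2) (.var 3))))))))))

/-- AUX: handler for the `ε` case: `λf λk. k ⟨1⟩`. -/
def HC : Lam :=
  .lam (.lam (.app (.var 0) (encBits [true])))

/-- AUX: the recursion kernel `λf λs λk. s HA HB HC f k`. -/
def GT : Lam :=
  .lam (.lam (.lam (.app (.app (.app (.app (.app (.var 1) HA) HB) HC) (.var 2)) (.var 0))))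

/-- AUX: the successor term `λk λs. GT GT s k`. -/
def SuccT : Lam :=
  .lam (.lam (.app (.app (.app GT GT) (.var 0)) (.var 1)))

namespace Lam

lemma closed_mono : ∀ (t : Lam) (d d' : ℕ), ClosedUnder d t → d ≤ d' → ClosedUnder d' t
  | var n, d, d', h, hle => lt_of_lt_of_le h hle
  | lam t, d, d', h, hle => closed_mono t (d+1) (d'+1) h (by omega)
  | app t u, d, d', h, hle => ⟨closed_mono t d d' h.1 hle, closed_mono u d d' h.2 hle⟩

lemma closed_lift : ∀ (t : Lam) (d : ℕ), ClosedUnder d t → lift d t = t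
  | var n, d, h => by have h' : n < d := h; simp [lift, h']
  | lam t, d, h => by simp [lift, closed_lift t (d+1) h]
  | app t u, d, h => by simp [lift, closed_lift t d h.1, closed_lift u d h.2]

lemma closed_subst : ∀ (t : Lam) (d : ℕ) (u : Lam), ClosedUnder d t → subst t d u = t
  | var n, d, u, h => by have h' : n < d := h; simp [subst, h']
  | lam t, d, u, h => by simp [subst, closed_subst t (d+1) (lift 0 u) h]
  | app t s, d, u, h => by simp [subst, closed_subst t d u h.1, closed_subst s d u h.2]

@[simp] lemma subst_lift : ∀ (t : Lam) (k : ℕ) (u : Lam), subst (lift k t) k u = t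
  | var n, k, u => by
      by_cases h : n < k
      · simp [lift, subst, h]
      · simp [lift, subst, h, Nat.lt_irrefl]
        rw [if_neg (by omega), if_neg (by omega)]
  | lam t, k, u => by simp [lift, subst, subst_lift t (k+1) (lift 0 u)]
  | app t s, k, u => by simp [lift, subst, subst_lift t k u, subst_lift s k u]

lemma stepN_trans {m n : ℕ} {t u r : Lam} (h1 : StepN m t u) (h2 : StepN n u r) :
    StepN (m + n) t r := by
  induction h1 with
  | refl => simpa using h2
  | head s _ ih => exact Nat.add_right_comm _ 1 n ▸ StepN.head s (ih h2)

lemma stepN_zero_of_eq {t u : Lam} (h : t = u) : StepN 0 t u := h ▸ .refl t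

end Lam

lemma encBits_closed : ∀ (s : List Bool) (d : ℕ), Lam.ClosedUnder d (encBits s)
  | [], d => by simp [encBits, Lam.ClosedUnder]
  | false :: s, d => by
      simp [encBits, Lam.ClosedUnder]
      exact Lam.closed_mono _ 0 _ (encBits_closed s 0) (by omega)
  | true :: s, d => by
      simp [encBits, Lam.ClosedUnder]
      exact Lam.closed_mono _ 0 _ (encBits_closed s 0) (by omega)

@[simp] lemma lift_encBits (d : ℕ) (s : List Bool) : Lam.lift d (encBits s) = encBits s :=
  Lam.closed_lift _ _ (encBits_closed s d)

@[simp] lemma subst_encBits (s : List Bool) (k : ℕ) (u : Lam) :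
    Lam.subst (encBits s) k u = encBits s :=
  Lam.closed_subst _ _ _ (encBits_closed s k)

lemma HA_closed (d : ℕ) : Lam.ClosedUnder d HA := by simp [HA, Lam.ClosedUnder]
lemma HB_closed (d : ℕ) : Lam.ClosedUnder d HB := by simp [HB, Lam.ClosedUnder]
lemma HC_closed (d : ℕ) : Lam.ClosedUnder d HC :=
  ⟨by show 0 < d + 2; omega, encBits_closed [true] _⟩

@[simp] lemma lift_HA (d : ℕ) : Lam.lift d HA = HA := Lam.closed_lift _ _ (HA_closed d)
@[simp] lemma lift_HB (d : ℕ) : Lam.lift d HB = HB := Lam.closed_lift _ _ (HB_closed d)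
@[simp] lemma lift_HC (d : ℕ) : Lam.lift d HC = HC := Lam.closed_lift _ _ (HC_closed d)
@[simp] lemma subst_HA (k : ℕ) (u : Lam) : Lam.subst HA k u = HA :=
  Lam.closed_subst _ _ _ (HA_closed k)
@[simp] lemma subst_HB (k : ℕ) (u : Lam) : Lam.subst HB k u = HB :=
  Lam.closed_subst _ _ _ (HB_closed k)
@[simp] lemma subst_HC (k : ℕ) (u : Lam) : Lam.subst HC k u = HC :=
  Lam.closed_subst _ _ _ (HC_closed k)

lemma GT_closed (d : ℕ) : Lam.ClosedUnder d GT :=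
  ⟨⟨⟨⟨⟨by show 1 < d + 3; omega, HA_closed _⟩, HB_closed _⟩, HC_closed _⟩,
    by show 2 < d + 3; omega⟩, by show 0 < d + 3; omega⟩

@[simp] lemma lift_GT (d : ℕ) : Lam.lift d GT = GT := Lam.closed_lift _ _ (GT_closed d)
@[simp] lemma subst_GT (k : ℕ) (u : Lam) : Lam.subst GT k u = GT :=
  Lam.closed_subst _ _ _ (GT_closed k)

lemma encBits_value (s : List Bool) : (encBits s).IsValue := by
  cases s with
  | nil => trivial
  | cons b t => cases b <;> trivial

/-- AUX main run lemma. -/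
lemma run_lemma : ∀ (s : List Bool) (k : Lam), k.IsValue →
    ∃ m : ℕ, m ≤ 10 * s.length + 10 ∧
      Lam.StepN m (.app (.app (.app GT GT) (encBits s)) k)
        (.app k (encBits (rsucc s))) := by
  intro s
  induction s with
  | nil =>
    intro k hk
    refine ⟨8, by omega, ?_⟩
    refine .head (.appL hk (.appL (encBits_value []) (.beta (by trivial)))) ?_
    simp [GT, HA, HB, HC, encBits, Lam.subst, Lam.lift]
    refine .head (.appL hk (.beta (by trivial))) ?_
    simp [Lam.subst, Lam.lift]
    refine .head (.beta hk) ?_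
    simp [Lam.subst, Lam.lift]
    refine .head (.appL hk (.appL (by trivial) (.appL (by trivial) (.appL (by trivial) (.beta (by trivial)))))) ?_
    simp [Lam.subst, Lam.lift]
    refine .head (.appL hk (.appL (by trivial) (.appL (by trivial) (.beta (by trivial))))) ?_
    simp [Lam.subst, Lam.lift]
    refine .head (.appL hk (.appL (by trivial) (.beta (by trivial)))) ?_
    simp [Lam.subst, Lam.lift]
    refine .head (.appL hk (.beta (by trivial))) ?_
    simp [Lam.subst, Lam.lift]
    refine .head (.beta hk) ?_
    exact Lam.stepN_zero_of_eq (by simp [rsucc, encBits, Lam.subst, Lam.lift])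
  | cons b s ih =>
    intro k hk
    cases b with
    | false =>
      refine ⟨9, by omega, ?_⟩
      refine .head (.appL hk (.appL (encBits_value _) (.beta (by trivial)))) ?_
      simp [GT, HA, HB, HC, encBits, Lam.subst, Lam.lift]
      refine .head (.appL hk (.beta (by trivial))) ?_
      simp [Lam.subst, Lam.lift]
      refine .head (.beta hk) ?_
      simp [Lam.subst, Lam.lift]
      refine .head (.appL hk (.appL (by trivial) (.appL (by trivial) (.appL (by trivial) (.beta (by trivial)))))) ?_
      simp [Lam.subst, Lam.lift]
      refine .head (.appL hk (.appL (by trivial) (.appL (by trivial) (.beta (by trivial))))) ?_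
      simp [Lam.subst, Lam.lift]
      refine .head (.appL hk (.appL (by trivial) (.beta (by trivial)))) ?_
      simp [Lam.subst, Lam.lift]
      refine .head (.appL hk (.appL (by trivial) (.beta (encBits_value s)))) ?_
      simp [Lam.subst, Lam.lift]
      refine .head (.appL hk (.beta (by trivial))) ?_
      simp [Lam.subst, Lam.lift]
      refine .head (.beta hk) ?_
      exact Lam.stepN_zero_of_eq (by simp [rsucc, encBits, Lam.subst, Lam.lift])
    | true =>
      obtain ⟨m1, hm1, hrun⟩ := ih
        (.lam (.app (Lam.lift 0 k) (.lam (.lam (.lam (.app (.var 2) (.var 3)))))))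
        (by trivial)
      refine ⟨9 + (m1 + 1), by simp only [List.length_cons]; omega, ?_⟩
      refine Lam.stepN_trans ?_ (Lam.stepN_trans hrun ?_)
      · refine .head (.appL hk (.appL (encBits_value _) (.beta (by trivial)))) ?_
        simp [GT, HA, HB, HC, encBits, Lam.subst, Lam.lift]
        refine .head (.appL hk (.beta (by trivial))) ?_
        simp [Lam.subst, Lam.lift]
        refine .head (.beta hk) ?_
        simp [Lam.subst, Lam.lift]
        refine .head (.appL hk (.appL (by trivial) (.appL (by trivial) (.appL (by trivial) (.beta (by trivial)))))) ?_
        simp [Lam.subst, Lam.lift]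
        refine .head (.appL hk (.appL (by trivial) (.appL (by trivial) (.beta (by trivial))))) ?_
        simp [Lam.subst, Lam.lift]
        refine .head (.appL hk (.appL (by trivial) (.beta (by trivial)))) ?_
        simp [Lam.subst, Lam.lift]
        refine .head (.appL hk (.appL (by trivial) (.beta (encBits_value s)))) ?_
        simp [Lam.subst, Lam.lift]
        refine .head (.appL hk (.beta (by trivial))) ?_
        simp [Lam.subst, Lam.lift]
        refine .head (.beta hk) ?_
        exact Lam.stepN_zero_of_eq (by simp [GT, HA, HB, HC, encBits, Lam.subst, Lam.lift])
      · refine .head (.beta (encBits_value _)) ?_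
        exact Lam.stepN_zero_of_eq (by simp [rsucc, encBits, Lam.subst, Lam.lift])


/-- there is a closed λ-term `succ_λ` of `Λ_det` and a constant `c`
    such that for every value `k` and every `n`,
    `succ_λ k ⟨n̂⟩ →det^m k ⟨succ(n̂)⟩` with `m ≤ c·(log₂(n+1)+1)`. -/
theorem succ_term_correct :
    ∃ (succTm : Lam) (c : ℕ), succTm.Closed ∧ succTm.InDet ∧
      ∀ kont : Lam, kont.IsValue → kont.InDet → ∀ n : ℕ,
        ∃ m : ℕ, m ≤ c * (Nat.log 2 (n + 1) + 1) ∧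
          Lam.StepN m (.app (.app succTm kont) (encBits (Nat.bits n)))
            (.app kont (encBits (rsucc (Nat.bits n)))) := by
  refine ⟨SuccT, 22, ?_, ?_, ?_⟩
  · exact ⟨⟨⟨GT_closed _, GT_closed _⟩, by show 0 < 2; omega⟩, by show 1 < 2; omega⟩
  · simp [SuccT, GT, HA, HB, HC, encBits, Lam.InDet, Lam.IsValue]
  · intro kont hv _ n
    obtain ⟨m1, hm1, hrun⟩ := run_lemma (Nat.bits n) kont hv
    have hlen : (Nat.bits n).length ≤ Nat.log 2 (n + 1) + 1 := by
      rw [Nat.size_eq_bits_len]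
      exact Nat.size_le.mpr (lt_trans (Nat.lt_succ_self n)
        (Nat.lt_pow_succ_log_self one_lt_two (n + 1)))
    refine ⟨2 + m1, by omega, ?_⟩
    refine Lam.stepN_trans (m := 2) ?_ hrun
    refine .head (.appL (encBits_value _) (.beta hv)) ?_
    simp [SuccT, Lam.subst, Lam.lift]
    refine .head (.beta (encBits_value _)) ?_
    exact Lam.stepN_zero_of_eq (by simp [GT, HA, HB, HC, encBits, Lam.subst, Lam.lift])

end LogTM
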